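/- Let n ≥ 2, let F be a field of characteristic ≠ 2 and α ∈ F with 1 + 2α(n−1) ≠ 0. Then the Matsuo algebra M_α(𝒜_n^±) over F is unital with identity element u = (1 + 2α(n−1))⁻¹ Σ_{t ∈ T_n, ε = ±1} (t,ε), i.e. u·x = x for every x ∈ M_α(𝒜_n^±). -/

import Mathlib

open Equiv Finsupp

instance {n : ℕ} : DecidablePred (Equiv.Perm.IsSwap : Equiv.Perm (Fin n) → Prop) := by
  intro σ; unfold Equiv.Perm.IsSwap; infer_instance

abbrev Tr (n : ℕ) : Type := {σ : Equiv.Perm (Fin (n + 1)) // σ.IsSwap}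

/-- Two transpositions are collinear when their supports share exactly one point. -/
def Coll {n : ℕ} (s t : Tr n) : Prop :=
  (s.1.support ∩ t.1.support).card = 1

instance {n : ℕ} (s t : Tr n) : Decidable (Coll s t) := by
  unfold Coll; infer_instance

/-- The third point `s·t·s` of the line through collinear transpositions. -/
def wedge {n : ℕ} (s t : Tr n) : Tr n :=
  ⟨s.1 * t.1 * s.1, by
    obtain ⟨x, y, hxy, ht⟩ := t.2
    obtain ⟨a, b, hab, hs⟩ := s.2
    have hinv : s.1⁻¹ = s.1 := by rw [hs]; exact Equiv.swap_inv a b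
    exact ⟨s.1 x, s.1 y, fun h => hxy (s.1.injective h), by
      rw [ht, Equiv.swap_apply_apply, hinv]⟩⟩

/-- The point set of the double graph `𝒜_n^± = 𝒟_{n+1}`: pairs `(t, ε)` with `t` a
transposition of `Sym(n+1)` and `ε ∈ {+1, -1}`. -/
abbrev DTr (n : ℕ) : Type := Tr n × ℤˣ

variable (F : Type*) [Field F]

/-- Product of two basis points of the Matsuo algebra `M_α(𝒜_n^±)`. -/
noncomputable def pointMulD {n : ℕ} (α : F) (p q : DTr n) : DTr n →₀ F :=
  if p = q then Finsupp.single p 1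
  else if Coll p.1 q.1 then
    (α / 2) • (Finsupp.single p 1 + Finsupp.single q 1 -
      Finsupp.single (wedge p.1 q.1, p.2 * q.2) 1)
  else 0

/-- The multiplication of the Matsuo algebra `M_α(𝒜_n^±)`, as a bilinear map on the
free module on `T_n × {+1, -1}`. -/
noncomputable def matsuoMulD (n : ℕ) (α : F) :
    (DTr n →₀ F) →ₗ[F] (DTr n →₀ F) →ₗ[F] (DTr n →₀ F) :=
  Finsupp.lsum F fun p =>
    LinearMap.toSpanSingleton F _
      (Finsupp.lsum F fun q => LinearMap.toSpanSingleton F _ (pointMulD F α p q))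


section MatsuoAux

variable {n : ℕ}

lemma pair_inter_cases {u v a b : Fin (n+1)} (huv : u ≠ v) (hab : a ≠ b)
    (h : ({u,v} ∩ {a,b} : Finset (Fin (n+1))).card = 1) :
    ((u = a ∨ u = b) ∧ ¬(v = a ∨ v = b)) ∨ ((v = a ∨ v = b) ∧ ¬(u = a ∨ u = b)) := by
  by_cases hu : u = a ∨ u = b <;> by_cases hv : v = a ∨ v = b
  · exfalso
    have : ({u,v} ∩ {a,b} : Finset (Fin (n+1))) = {u,v} := by
      ext w; simp only [Finset.mem_inter, Finset.mem_insert, Finset.mem_singleton]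
      constructor
      · tauto
      · rintro (rfl | rfl) <;> tauto
    rw [this, Finset.card_insert_of_notMem (by simpa using huv), Finset.card_singleton] at h
    omega
  · exact Or.inl ⟨hu, hv⟩
  · exact Or.inr ⟨hv, hu⟩
  · exfalso
    have : ({u,v} ∩ {a,b} : Finset (Fin (n+1))) = ∅ := by
      ext w; simp only [Finset.mem_inter, Finset.mem_insert, Finset.mem_singleton,
        Finset.notMem_empty, iff_false, not_and]
      rintro (rfl | rfl) <;> tauto
    rw [this] at h; simp at h

lemma coll_of {a b c : Fin (n+1)} (hab : a ≠ b) (hac : a ≠ c) (hbc : b ≠ c)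
    {s t : Tr n} (hs : s.1 = swap a b) (ht : t.1 = swap a c) : Coll s t := by
  unfold Coll
  rw [hs, ht, Equiv.Perm.support_swap hab, Equiv.Perm.support_swap hac]
  have : ({a,b} ∩ {a,c} : Finset (Fin (n+1))) = {a} := by
    ext w; simp only [Finset.mem_inter, Finset.mem_insert, Finset.mem_singleton]
    constructor
    · rintro ⟨h1 | h1, h2 | h2⟩ <;> first | assumption | exact absurd (h1.symm.trans h2) hbc
    · rintro rfl; tauto
  rw [this, Finset.card_singleton]

lemma coll_elim {s t : Tr n} (h : Coll s t) :
    ∃ a b c : Fin (n+1), a ≠ b ∧ a ≠ c ∧ b ≠ c ∧ s.1 = swap a b ∧ t.1 = swap a c := by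
  obtain ⟨u, v, huv, hs⟩ := s.2
  obtain ⟨x, y, hxy, ht⟩ := t.2
  unfold Coll at h
  rw [hs, ht, Equiv.Perm.support_swap huv, Equiv.Perm.support_swap hxy] at h
  rcases pair_inter_cases huv hxy h with ⟨hu, hv⟩ | ⟨hv, hu⟩
  · rcases hu with rfl | rfl
    · exact ⟨u, v, y, huv, fun h' => hv (by tauto), fun h' => hv (by tauto), hs, ht⟩
    · exact ⟨u, v, x, huv, fun h' => hv (by tauto), fun h' => hv (by tauto), hs,
        by rw [ht, swap_comm]⟩
  · rcases hv with rfl | rfl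
    · exact ⟨v, u, y, (Ne.symm huv), fun h' => hu (by tauto), fun h' => hu (by tauto),
        by rw [hs, swap_comm], ht⟩
    · exact ⟨v, u, x, (Ne.symm huv), fun h' => hu (by tauto), fun h' => hu (by tauto),
        by rw [hs, swap_comm], by rw [ht, swap_comm]⟩

lemma wedge_val {a b c : Fin (n+1)} (hab : a ≠ b) (hac : a ≠ c) (hbc : b ≠ c)
    {s t : Tr n} (hs : s.1 = swap a b) (ht : t.1 = swap a c) :
    (wedge s t).1 = swap b c := by
  show s.1 * t.1 * s.1 = swap b c
  have hinv : s.1⁻¹ = s.1 := by rw [hs]; exact Equiv.swap_inv a b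
  calc s.1 * t.1 * s.1 = s.1 * t.1 * s.1⁻¹ := by rw [hinv]
    _ = swap (s.1 a) (s.1 c) := by rw [ht, ← Equiv.swap_apply_apply]
    _ = swap b c := by
        rw [hs, Equiv.swap_apply_left, Equiv.swap_apply_of_ne_of_ne (Ne.symm hac) (Ne.symm hbc)]

lemma coll_wedge {s t : Tr n} (h : Coll s t) : Coll (wedge s t) t := by
  obtain ⟨a, b, c, hab, hac, hbc, hs, ht⟩ := coll_elim h
  exact coll_of (Ne.symm hbc) (fun h' => hac h'.symm) (fun h' => hab h'.symm)
    (by rw [wedge_val hab hac hbc hs ht, swap_comm]) (by rw [ht, swap_comm])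

lemma wedge_wedge {s t : Tr n} (h : Coll s t) : wedge (wedge s t) t = s := by
  obtain ⟨a, b, c, hab, hac, hbc, hs, ht⟩ := coll_elim h
  apply Subtype.ext
  rw [wedge_val (a := c) (b := b) (c := a) (Ne.symm hbc) (fun h' => hac h'.symm)
    (fun h' => hab h'.symm) (by rw [wedge_val hab hac hbc hs ht, swap_comm])
    (by rw [ht, swap_comm]), swap_comm, hs]

lemma coll_ne_val {s t : Tr n} (h : Coll s t) : s.1 ≠ t.1 := by
  intro hst
  obtain ⟨u, v, huv, hs⟩ := s.2
  unfold Coll at h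
  have ht : t.1 = swap u v := hst ▸ hs
  rw [hst, Finset.inter_self, ht, Equiv.Perm.support_swap huv,
    Finset.card_insert_of_notMem (by simpa using huv), Finset.card_singleton] at h
  omega

set_option maxHeartbeats 2000000 in
lemma card_coll (t : Tr n) : (Finset.univ.filter fun s : Tr n => Coll s t).card = 2 * (n - 1) := by
  obtain ⟨a, b, hab, ht⟩ := t.2
  have key : (({a, b} : Finset (Fin (n+1))) ×ˢ ({a, b} : Finset (Fin (n+1)))ᶜ).card
      = (Finset.univ.filter fun s : Tr n => Coll s t).card := by
    apply Finset.card_bij (fun p hp => (⟨swap p.1 p.2, p.1, p.2, by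
      rw [Finset.mem_product, Finset.mem_compl] at hp
      exact fun h' => hp.2 (h' ▸ hp.1), rfl⟩ : Tr n))
    · intro p hp
      rw [Finset.mem_product, Finset.mem_compl, Finset.mem_insert, Finset.mem_singleton,
        Finset.mem_insert, Finset.mem_singleton] at hp
      obtain ⟨h1, h2⟩ := hp
      rw [Finset.mem_filter]
      refine ⟨Finset.mem_univ _, ?_⟩
      unfold Coll
      have hne : p.1 ≠ p.2 := fun h' => h2 (h' ▸ h1)
      rw [show ((⟨swap p.1 p.2, ⟨p.1, p.2, hne, rfl⟩⟩ : Tr n) : Perm (Fin (n+1))) = swap p.1 p.2 from rfl,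
        ht, Equiv.Perm.support_swap hne, Equiv.Perm.support_swap hab]
      have : ({p.1, p.2} ∩ {a, b} : Finset (Fin (n+1))) = {p.1} := by
        ext w
        simp only [Finset.mem_inter, Finset.mem_insert, Finset.mem_singleton]
        constructor
        · rintro ⟨h3 | h3, h4⟩
          · exact h3
          · exact absurd (h3 ▸ h4) h2
        · rintro rfl; exact ⟨Or.inl rfl, h1⟩
      rw [this, Finset.card_singleton]
    · intro p hp p' hp' heq
      rw [Finset.mem_product, Finset.mem_compl] at hp hp'
      have hne : p.1 ≠ p.2 := fun h' => hp.2 (h' ▸ hp.1)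
      have hne' : p'.1 ≠ p'.2 := fun h' => hp'.2 (h' ▸ hp'.1)
      have hval : swap p.1 p.2 = swap p'.1 p'.2 := congrArg Subtype.val heq
      have hsupp : ({p.1, p.2} : Finset (Fin (n+1))) = {p'.1, p'.2} := by
        rw [← Equiv.Perm.support_swap hne, ← Equiv.Perm.support_swap hne', hval]
      have h1 : p.1 = p'.1 := by
        have := Finset.mem_insert_self p.1 ({p.2} : Finset (Fin (n+1)))
        rw [hsupp, Finset.mem_insert, Finset.mem_singleton] at this
        rcases this with h' | h'
        · exact h'
        · exact absurd (h' ▸ hp.1) hp'.2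
      have h2 : p.2 = p'.2 := by
        have hm : p.2 ∈ ({p'.1, p'.2} : Finset (Fin (n+1))) := by rw [← hsupp]; simp
        rw [Finset.mem_insert, Finset.mem_singleton] at hm
        rcases hm with h' | h'
        · exact absurd (h'.symm ▸ hp'.1) hp.2
        · exact h'
      exact Prod.ext h1 h2
    · intro s hs
      rw [Finset.mem_filter] at hs
      obtain ⟨u, v, huv, hsv⟩ := s.2
      have hcoll := hs.2
      unfold Coll at hcoll
      rw [hsv, ht, Equiv.Perm.support_swap huv, Equiv.Perm.support_swap hab] at hcoll
      rcases pair_inter_cases huv hab hcoll with ⟨hu, hv⟩ | ⟨hv, hu⟩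
      · refine ⟨(u, v), ?_, ?_⟩
        · rw [Finset.mem_product, Finset.mem_compl]
          simp only [Finset.mem_insert, Finset.mem_singleton]
          tauto
        · exact Subtype.ext hsv.symm
      · refine ⟨(v, u), ?_, ?_⟩
        · rw [Finset.mem_product, Finset.mem_compl]
          simp only [Finset.mem_insert, Finset.mem_singleton]
          tauto
        · refine Subtype.ext ?_
          show swap v u = s.1
          rw [hsv]
          exact swap_comm v u
  rw [← key, Finset.card_product, Finset.card_compl,
    Finset.card_insert_of_notMem (by simpa using hab), Finset.card_singleton]
  rw [Fintype.card_fin]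
  omega

set_option maxHeartbeats 2000000 in
lemma card_collD (q : DTr n) :
    (Finset.univ.filter fun p : DTr n => Coll p.1 q.1).card = 4 * (n - 1) := by
  have h1 : (Finset.univ.filter fun p : DTr n => Coll p.1 q.1)
      = (Finset.univ.filter fun s : Tr n => Coll s q.1) ×ˢ (Finset.univ : Finset ℤˣ) := by
    ext p
    simp only [Finset.mem_filter, Finset.mem_product, Finset.mem_univ, true_and, and_true]
  rw [h1, Finset.card_product, card_coll, show (Finset.univ : Finset ℤˣ).card = 2 from by decide]
  omega

set_option maxHeartbeats 2000000 in
lemma sum_wedge (q : DTr n) :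
    ∑ p ∈ Finset.univ.filter (fun p : DTr n => Coll p.1 q.1),
        Finsupp.single (M := F) (wedge p.1 q.1, p.2 * q.2) (1 : F)
      = ∑ p ∈ Finset.univ.filter (fun p : DTr n => Coll p.1 q.1),
        Finsupp.single p (1 : F) := by
  apply Finset.sum_nbij' (i := fun p : DTr n => ((wedge p.1 q.1, p.2 * q.2) : DTr n))
    (j := fun p : DTr n => ((wedge p.1 q.1, p.2 * q.2) : DTr n))
  · intro p hp
    rw [Finset.mem_filter] at hp ⊢
    exact ⟨Finset.mem_univ _, coll_wedge hp.2⟩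
  · intro p hp
    rw [Finset.mem_filter] at hp ⊢
    exact ⟨Finset.mem_univ _, coll_wedge hp.2⟩
  · intro p hp
    rw [Finset.mem_filter] at hp
    refine Prod.ext (wedge_wedge hp.2) ?_
    show p.2 * q.2 * q.2 = p.2
    rw [mul_assoc, Int.units_mul_self, mul_one]
  · intro p hp
    rw [Finset.mem_filter] at hp
    refine Prod.ext (wedge_wedge hp.2) ?_
    show p.2 * q.2 * q.2 = p.2
    rw [mul_assoc, Int.units_mul_self, mul_one]
  · intro p _
    rfl

set_option maxHeartbeats 2000000 in
lemma key_sum (hn : 1 ≤ n) (hchar : (2 : F) ≠ 0) (α : F) (q : DTr n) :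
    ∑ p : DTr n, pointMulD F α p q
      = (1 + 2 * α * ((n : F) - 1)) • Finsupp.single q (1 : F) := by
  classical
  have split : ∀ p : DTr n, pointMulD F α p q =
      (if p = q then Finsupp.single q (1 : F) else 0) +
      (if Coll p.1 q.1 then
        (α / 2) • (Finsupp.single p 1 + Finsupp.single q 1 -
          Finsupp.single (wedge p.1 q.1, p.2 * q.2) 1) else 0) := by
    intro p
    unfold pointMulD
    by_cases h1 : p = q
    · subst h1
      rw [if_pos rfl, if_pos rfl, if_neg (fun h => coll_ne_val h rfl), add_zero]
    · rw [if_neg h1, if_neg h1, zero_add]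
  rw [Finset.sum_congr rfl (fun p _ => split p), Finset.sum_add_distrib,
    Fintype.sum_ite_eq' q (fun _ => Finsupp.single q (1 : F)), ← Finset.sum_filter,
    ← Finset.smul_sum, Finset.sum_sub_distrib, Finset.sum_add_distrib, sum_wedge,
    Finset.sum_const, card_collD, add_sub_cancel_left]
  rw [← Nat.cast_smul_eq_nsmul F, smul_smul]
  have hcast : ((4 * (n - 1) : ℕ) : F) = 4 * ((n : F) - 1) := by
    push_cast [Nat.cast_sub hn]
    ring
  rw [hcast]
  have harith : α / 2 * (4 * ((n : F) - 1)) = 2 * α * ((n : F) - 1) := by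
    field_simp
    ring
  rw [harith]
  rw [add_smul, one_smul]

set_option maxHeartbeats 2000000 in
lemma matsuo_single_case (hn : 2 ≤ n) (hchar : (2 : F) ≠ 0) (α : F)
    (hα : 1 + 2 * α * ((n : F) - 1) ≠ 0) (q : DTr n) (c : F) :
    matsuoMulD F n α
        ((1 + 2 * α * ((n : F) - 1))⁻¹ • ∑ p : DTr n, Finsupp.single p (1 : F))
        (Finsupp.single q c) = Finsupp.single q c := by
  rw [map_smul, map_sum, LinearMap.smul_apply, LinearMap.sum_apply]
  have hterm : ∀ p : DTr n,
      matsuoMulD F n α (Finsupp.single p 1) (Finsupp.single q c)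
        = c • pointMulD F α p q := by
    intro p
    rw [matsuoMulD, Finsupp.lsum_single, LinearMap.toSpanSingleton_apply, one_smul,
      Finsupp.lsum_single, LinearMap.toSpanSingleton_apply]
  rw [Finset.sum_congr rfl (fun p _ => hterm p), ← Finset.smul_sum,
    key_sum F (by omega) hchar α q, smul_smul, smul_smul]
  have hk : (1 + 2 * α * ((n : F) - 1))⁻¹ * c * (1 + 2 * α * ((n : F) - 1)) = c := by
    rw [mul_comm _ c, mul_assoc, inv_mul_cancel₀ hα, mul_one]
  rw [hk, Finsupp.smul_single, smul_eq_mul, mul_one]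

end MatsuoAux

/-- for `n ≥ 2` and `1 + 2α(n-1) ≠ 0`, the Matsuo algebra `M_α(𝒜_n^±)` over
a field of characteristic `≠ 2` is unital with identity
`(1 + 2α(n-1))⁻¹ ∑_{t ∈ T_n, ε = ±1} (t, ε)`. -/
theorem matsuo_AnPM_unital (n : ℕ) (hn : 2 ≤ n) (F : Type*) [Field F]
    (hchar : (2 : F) ≠ 0) (α : F) (hα : 1 + 2 * α * ((n : F) - 1) ≠ 0) :
    ∀ x : DTr n →₀ F,
      matsuoMulD F n α
        ((1 + 2 * α * ((n : F) - 1))⁻¹ • ∑ p : DTr n, Finsupp.single p (1 : F)) x = x := by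
  intro x
  induction x using Finsupp.induction_linear with
  | zero => rw [map_zero]
  | add f g hf hg => rw [map_add, hf, hg]
  | single q c => exact matsuo_single_case F hn hchar α hα q c
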